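/- Let (ρ̂(t), b̂(t), ŵ(t)) : [0,∞) → ℂ³ solve the linear ODE system: d/dt ρ̂ + r b̂ = 0, d/dt b̂ + a r² b̂ - P r ρ̂ = 0, d/dt ŵ + r² ŵ = 0, where r > 0, a > 0, P > 0. Define L(t) = (1/2)(P|ρ̂|² + |b̂|² + |ŵ|² - 2δ r Re(ρ̂ conj(b̂))) with δ > 0 chosen so that δ ≤ min{1/2, a/4, √P/2} and r ≤ min{1/2, √(P/a), √P/2}. Then there exists C₅ > 0 (depending only on a, P, δ) such that d/dt L(t) + C₅ r² L(t) ≤ 0, and consequently L(t) ≤ e^{-C₅ r² t} L(0) for all t ≥ 0. -/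

import Mathlib

open Real

/-- The perturbed energy `L(t) = (1/2)(P|ρ̂|² + |b̂|² + |ŵ|² - 2δr Re(ρ̂ conj b̂))`. -/
noncomputable def energyL (P δ r : ℝ) (ρ b w : ℝ → ℂ) (s : ℝ) : ℝ :=
  (1/2) * (P * ‖ρ s‖ ^ 2 + ‖b s‖ ^ 2 + ‖w s‖ ^ 2 -
    2 * δ * r * (ρ s * (starRingEnd ℂ) (b s)).re)

lemma deriv_normSq' {f : ℝ → ℂ} {f' : ℂ} {t : ℝ} (h : HasDerivAt f f' t) :
    HasDerivAt (fun s => ‖f s‖^2) (2*(f' * (starRingEnd ℂ) (f t)).re) t := by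
  have hre : HasDerivAt (fun s => (f s).re) f'.re t :=
    (Complex.reCLM.hasFDerivAt.comp_hasDerivAt t h)
  have him : HasDerivAt (fun s => (f s).im) f'.im t :=
    (Complex.imCLM.hasFDerivAt.comp_hasDerivAt t h)
  have H := (hre.mul hre).add (him.mul him)
  have heq : (fun s => ‖f s‖^2) = (fun s => (f s).re * (f s).re + (f s).im * (f s).im) := by
    funext s
    rw [← Complex.normSq_apply, ← Complex.sq_norm]
  rw [heq]
  refine H.congr_deriv ?_
  simp [Complex.mul_re]
  ring

lemma deriv_cross' {f g : ℝ → ℂ} {f' g' : ℂ} {t : ℝ}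
    (hf : HasDerivAt f f' t) (hg : HasDerivAt g g' t) :
    HasDerivAt (fun s => (f s * (starRingEnd ℂ) (g s)).re)
      ((f' * (starRingEnd ℂ) (g t)).re + (f t * (starRingEnd ℂ) g').re) t := by
  have hfr : HasDerivAt (fun s => (f s).re) f'.re t :=
    (Complex.reCLM.hasFDerivAt.comp_hasDerivAt t hf)
  have hfi : HasDerivAt (fun s => (f s).im) f'.im t :=
    (Complex.imCLM.hasFDerivAt.comp_hasDerivAt t hf)
  have hgr : HasDerivAt (fun s => (g s).re) g'.re t :=
    (Complex.reCLM.hasFDerivAt.comp_hasDerivAt t hg)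
  have hgi : HasDerivAt (fun s => (g s).im) g'.im t :=
    (Complex.imCLM.hasFDerivAt.comp_hasDerivAt t hg)
  have H := (hfr.mul hgr).add (hfi.mul hgi)
  have heq : (fun s => (f s * (starRingEnd ℂ) (g s)).re)
      = (fun s => (f s).re * (g s).re + (f s).im * (g s).im) := by
    funext s; simp [Complex.mul_re]
  rw [heq]
  refine H.congr_deriv ?_
  simp [Complex.mul_re]
  ring

-- derivative of the energy
set_option maxHeartbeats 1000000 in
lemma energy_deriv (a P r δ : ℝ) (ρ b w : ℝ → ℂ) (t : ℝ)
    (hρ : HasDerivAt ρ (-(r : ℂ) * b t) t)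
    (hb : HasDerivAt b (-(a : ℂ) * (r:ℂ)^2 * b t + (P : ℂ) * (r:ℂ) * ρ t) t)
    (hw : HasDerivAt w (-(r : ℂ)^2 * w t) t) :
    HasDerivAt (energyL P δ r ρ b w)
      (-(r^2) * (δ*P*‖ρ t‖^2 + (a-δ)*‖b t‖^2 + ‖w t‖^2
        - δ*a*r*(ρ t * (starRingEnd ℂ) (b t)).re)) t := by
  have h1 := deriv_normSq' hρ
  have h2 := deriv_normSq' hb
  have h3 := deriv_normSq' hw
  have h4 := deriv_cross' hρ hb
  have H := ((((h1.const_mul P).add h2).add h3).sub (h4.const_mul (2*δ*r))).const_mul (1/2 : ℝ)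
  have heq : energyL P δ r ρ b w = fun s => (1/2 : ℝ) *
      (P * ‖ρ s‖^2 + ‖b s‖^2 + ‖w s‖^2 - 2*δ*r*(ρ s * (starRingEnd ℂ) (b s)).re) := rfl
  rw [heq]
  refine H.congr_deriv ?_
  have hnorm : ∀ z : ℂ, ‖z‖^2 = z.re*z.re + z.im*z.im := fun z => by
    rw [← Complex.normSq_apply, ← Complex.sq_norm]
  simp only [hnorm, Complex.mul_re, Complex.mul_im, Complex.add_re, Complex.add_im,
    Complex.neg_re, Complex.neg_im, Complex.conj_re, Complex.conj_im,
    Complex.ofReal_re, Complex.ofReal_im, pow_two]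
  ring

set_option maxHeartbeats 1000000 in
lemma key_ineq (a P r δ s u v c : ℝ) (hP : 0 < P) (ha : 0 < a) (hr : 0 < r) (hδ : 0 < δ)
    (hs : 0 ≤ s) (hu : 0 ≤ u)
    (hc1 : c ≤ s*u) (hc2 : -(s*u) ≤ c)
    (h1 : δ ≤ 1/2) (h2 : δ ≤ a/4) (h3 : 4*δ^2 ≤ P)
    (h4 : r ≤ 1/2) (h5 : a*r^2 ≤ P) (h6 : 4*r^2 ≤ P) :
    min (δ/2) (min (a/2) 1) * ((1/2)*(P*s^2+u^2+v^2-2*δ*r*c))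
      ≤ δ*P*s^2 + (a-δ)*u^2 + v^2 - δ*a*r*c := by
  set m := min (δ/2) (min (a/2) 1) with hm
  have hm1 : m ≤ δ/2 := min_le_left _ _
  have hm2 : m ≤ a/2 := le_trans (min_le_right _ _) (min_le_left _ _)
  have hm3 : m ≤ 1 := le_trans (min_le_right _ _) (min_le_right _ _)
  have hm0 : 0 < m := by positivity
  have h7 : δ*a*r*c ≤ δ*a*r*(s*u) :=
    mul_le_mul_of_nonneg_left hc1 (by positivity)
  have e1 : 2*P*(a*r*(s*u)) ≤ P^2*s^2 + a^2*r^2*u^2 := by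
    nlinarith [sq_nonneg (P*s - a*r*u)]
  have e2 : a^2*r^2*u^2 ≤ a*P*u^2 := by
    have h' : a^2*r^2 ≤ a*P := by nlinarith
    nlinarith [mul_le_mul_of_nonneg_right h' (sq_nonneg u)]
  have e3 : a*r*(s*u) ≤ (P/2)*s^2 + (a/2)*u^2 := by
    have h2P : (0:ℝ) < 2*P := by positivity
    have h' : 2*P*(a*r*(s*u)) ≤ 2*P*((P/2)*s^2 + (a/2)*u^2) := by nlinarith
    exact le_of_mul_le_mul_left h' h2P
  have hD : δ*a*r*c ≤ (δ*P/2)*s^2 + (a/4)*u^2 := by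
    have h8 : δ*(a*r*(s*u)) ≤ δ*((P/2)*s^2 + (a/2)*u^2) :=
      mul_le_mul_of_nonneg_left e3 hδ.le
    have h9 : δ*((a/2)*u^2) ≤ (a/4)*u^2 := by
      nlinarith [mul_nonneg (mul_nonneg (show (0:ℝ) ≤ 1/2-δ by linarith)
        (by linarith : (0:ℝ) ≤ a/2)) (sq_nonneg u)]
    linarith [h7, h8, h9]
  have hr2 : r^2 ≤ 1/4 := by nlinarith [mul_le_mul h4 h4 hr.le (by norm_num : (0:ℝ) ≤ 1/2)]
  have hdr : δ^2*r^2 ≤ P/16 := by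
    nlinarith [mul_le_mul (show δ^2 ≤ P/4 by linarith) hr2 (sq_nonneg r)
      (by linarith : (0:ℝ) ≤ P/4)]
  have hL : (1/2)*(P*s^2+u^2+v^2-2*δ*r*c) ≤ P*s^2+u^2+v^2 := by
    have hx : -(2*δ*r*c) ≤ 2*δ*r*(s*u) := by
      nlinarith [mul_le_mul_of_nonneg_left hc2 (by positivity : (0:ℝ) ≤ 2*δ*r)]
    have hy : 2*δ*r*(s*u) ≤ δ^2*r^2*s^2 + u^2 := by nlinarith [sq_nonneg (δ*r*s - u)]
    have hz : δ^2*r^2*s^2 ≤ (P/16)*s^2 := mul_le_mul_of_nonneg_right hdr (sq_nonneg s)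
    nlinarith [sq_nonneg s, sq_nonneg v, mul_nonneg hP.le (sq_nonneg s)]
  have step1 : m * ((1/2)*(P*s^2+u^2+v^2-2*δ*r*c)) ≤ m*(P*s^2+u^2+v^2) :=
    mul_le_mul_of_nonneg_left hL hm0.le
  have step2 : m*(P*s^2+u^2+v^2) ≤ (δ/2)*(P*s^2) + (a/2)*u^2 + v^2 := by
    have t1 : m*(P*s^2) ≤ (δ/2)*(P*s^2) :=
      mul_le_mul_of_nonneg_right hm1 (by positivity)
    have t2 : m*u^2 ≤ (a/2)*u^2 := mul_le_mul_of_nonneg_right hm2 (sq_nonneg u)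
    have t3 : m*v^2 ≤ v^2 := by nlinarith [sq_nonneg v]
    nlinarith
  linarith [hD, step1, step2,
    mul_nonneg (show (0:ℝ) ≤ a/4-δ by linarith) (sq_nonneg u)]

/-- Energy decay for the Fourier-transformed linearized system at a fixed low frequency
`|ξ| = r`: under the smallness conditions on `δ` and `r`, there is `C₅ > 0` with
`d/dt L + C₅ r² L ≤ 0`, hence `L(t) ≤ e^{-C₅ r² t} L(0)`. -/
theorem linearized_energy_decay (a P r δ : ℝ)
    (ha : 0 < a) (hP : 0 < P) (hr : 0 < r) (hδ : 0 < δ)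
    (hδ' : δ ≤ min (1/2) (min (a/4) (Real.sqrt P / 2)))
    (hr' : r ≤ min (1/2) (min (Real.sqrt (P/a)) (Real.sqrt P / 2)))
    (ρ b w : ℝ → ℂ)
    (hρ : ∀ t : ℝ, 0 ≤ t → HasDerivAt ρ (-(r : ℂ) * b t) t)
    (hb : ∀ t : ℝ, 0 ≤ t → HasDerivAt b (-(a : ℂ) * (r:ℂ)^2 * b t + (P : ℂ) * (r:ℂ) * ρ t) t)
    (hw : ∀ t : ℝ, 0 ≤ t → HasDerivAt w (-(r : ℂ)^2 * w t) t) :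
    ∃ C₅ : ℝ, 0 < C₅ ∧
      (∀ t : ℝ, 0 ≤ t → ∀ L' : ℝ,
        HasDerivAt (energyL P δ r ρ b w) L' t →
        L' + C₅ * r ^ 2 * energyL P δ r ρ b w t ≤ 0) ∧
      ∀ t : ℝ, 0 ≤ t →
        energyL P δ r ρ b w t ≤ Real.exp (-C₅ * r ^ 2 * t) * energyL P δ r ρ b w 0 := by
  -- extract scalar smallness conditions
  have hδ1 : δ ≤ 1/2 := le_trans hδ' (min_le_left _ _)
  have hδ2 : δ ≤ a/4 := le_trans hδ' (le_trans (min_le_right _ _) (min_le_left _ _))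
  have hδ3 : δ ≤ Real.sqrt P / 2 :=
    le_trans hδ' (le_trans (min_le_right _ _) (min_le_right _ _))
  have hr1 : r ≤ 1/2 := le_trans hr' (min_le_left _ _)
  have hr2 : r ≤ Real.sqrt (P/a) :=
    le_trans hr' (le_trans (min_le_right _ _) (min_le_left _ _))
  have hr3 : r ≤ Real.sqrt P / 2 :=
    le_trans hr' (le_trans (min_le_right _ _) (min_le_right _ _))
  have hsqP : Real.sqrt P ^ 2 = P := Real.sq_sqrt hP.le
  have h3 : 4*δ^2 ≤ P := by
    have : (2*δ)^2 ≤ Real.sqrt P ^ 2 :=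
      pow_le_pow_left₀ (by positivity) (by linarith) 2
    nlinarith
  have h6 : 4*r^2 ≤ P := by
    have : (2*r)^2 ≤ Real.sqrt P ^ 2 :=
      pow_le_pow_left₀ (by positivity) (by linarith) 2
    nlinarith
  have h5 : a*r^2 ≤ P := by
    have h' : r^2 ≤ Real.sqrt (P/a) ^ 2 := pow_le_pow_left₀ hr.le hr2 2
    rw [Real.sq_sqrt (by positivity)] at h'
    have := mul_le_mul_of_nonneg_left h' ha.le
    rw [mul_div_cancel₀] at this <;> [skip; positivity]
    linarith [this]
  set C₅ := min (δ/2) (min (a/2) 1) with hC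
  have hC0 : 0 < C₅ := by positivity
  -- the step inequality
  have hstep : ∀ t : ℝ, 0 ≤ t → ∀ L' : ℝ,
      HasDerivAt (energyL P δ r ρ b w) L' t →
      L' + C₅ * r ^ 2 * energyL P δ r ρ b w t ≤ 0 := by
    intro t ht L' hL'
    have hE := energy_deriv a P r δ ρ b w t (hρ t ht) (hb t ht) (hw t ht)
    have hLeq : L' = -(r^2) * (δ*P*‖ρ t‖^2 + (a-δ)*‖b t‖^2 + ‖w t‖^2
        - δ*a*r*(ρ t * (starRingEnd ℂ) (b t)).re) := hL'.unique hE
    set s := ‖ρ t‖; set u := ‖b t‖; set v := ‖w t‖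
    set c := (ρ t * (starRingEnd ℂ) (b t)).re with hc
    have habs : |c| ≤ s * u := by
      calc |c| ≤ ‖ρ t * (starRingEnd ℂ) (b t)‖ := Complex.abs_re_le_norm _
        _ = s * u := by rw [norm_mul, RCLike.norm_conj]
    have hkey := key_ineq a P r δ s u v c hP ha hr hδ (norm_nonneg _) (norm_nonneg _)
      (le_trans (le_abs_self c) habs) (by linarith [neg_abs_le c]) hδ1 hδ2 h3 hr1 h5 h6
    have hEt : energyL P δ r ρ b w t = (1/2)*(P*s^2+u^2+v^2-2*δ*r*c) := rfl
    rw [hLeq, hEt]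
    have := mul_le_mul_of_nonneg_left hkey (sq_nonneg r)
    nlinarith [this]
  refine ⟨C₅, hC0, hstep, ?_⟩
  -- Gronwall
  intro t ht
  set E := energyL P δ r ρ b w with hEdef
  set g := fun x : ℝ => Real.exp (C₅ * r^2 * x) * E x with hg
  have hgderiv : ∀ x : ℝ, 0 ≤ x → HasDerivAt g
      (Real.exp (C₅ * r^2 * x) * (C₅ * r^2) * E x
        + Real.exp (C₅ * r^2 * x) * (-(r^2) * (δ*P*‖ρ x‖^2 + (a-δ)*‖b x‖^2 + ‖w x‖^2
        - δ*a*r*(ρ x * (starRingEnd ℂ) (b x)).re))) x := by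
    intro x hx
    have hexp : HasDerivAt (fun y : ℝ => Real.exp (C₅ * r^2 * y))
        (Real.exp (C₅ * r^2 * x) * (C₅ * r^2)) x := by
      have h0 : HasDerivAt (fun y : ℝ => C₅ * r^2 * y) (C₅ * r^2) x := by
        simpa using (hasDerivAt_id x).const_mul (C₅ * r^2)
      simpa using h0.exp
    exact hexp.mul (energy_deriv a P r δ ρ b w x (hρ x hx) (hb x hx) (hw x hx))
  have hganti : AntitoneOn g (Set.Ici (0:ℝ)) := by
    apply antitoneOn_of_deriv_nonpos (convex_Ici 0)
    · exact fun x hx => ((hgderiv x hx).continuousAt).continuousWithinAt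
    · intro x hx
      rw [interior_Ici] at hx
      exact ((hgderiv x (le_of_lt hx)).differentiableAt).differentiableWithinAt
    · intro x hx
      rw [interior_Ici] at hx
      have hd := hgderiv x (le_of_lt hx)
      rw [hd.deriv]
      have hstep' := hstep x (le_of_lt hx) _
        (energy_deriv a P r δ ρ b w x (hρ x hx.le) (hb x hx.le) (hw x hx.le))
      have hexp0 : (0:ℝ) ≤ Real.exp (C₅ * r^2 * x) := (Real.exp_pos _).le
      nlinarith [mul_le_mul_of_nonneg_left hstep' hexp0]
  have hge := hganti (Set.self_mem_Ici) (Set.mem_Ici.mpr ht) ht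
  have hg0 : g 0 = E 0 := by simp [hg]
  have hgt : Real.exp (C₅ * r^2 * t) * E t ≤ E 0 := by
    rw [← hg0]; exact hge
  have := mul_le_mul_of_nonneg_left hgt (Real.exp_nonneg (-(C₅ * r^2 * t)))
  rw [← mul_assoc, ← Real.exp_add, neg_add_cancel, Real.exp_zero, one_mul] at this
  calc E t ≤ Real.exp (-(C₅ * r^2 * t)) * E 0 := this
    _ = Real.exp (-C₅ * r^2 * t) * E 0 := by ring_nf
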